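/- arXiv:2402.12572 — 3 statements merged into one kernel-verified Lean document; each statement's English description precedes it below -/
import Mathlib

section
/- Let f : ℝⁿ → Y be a function, x* ∈ ℝⁿ, and let t be a nonempty finite index set with, for each i ∈ t, a vector aᵢ ∈ ℝⁿ with aᵢ ≠ 0 and a scalar bᵢ ∈ ℝ. Suppose the set B = {x ∈ ℝⁿ : f(x) ≠ f(x*)} is nonempty and contained in the union over i ∈ t of the hyperplanes Hᵢ = {x : ⟪aᵢ, x⟫ = bᵢ}. Then min over i ∈ t of |⟪aᵢ, x*⟫ − bᵢ| / ‖aᵢ‖ ≤ infDist(x*, B); that is, the minimum projection distance is a lower bound on the pointwise ℓ₂ robustness radius of f at x*. -/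
open scoped RealInnerProductSpace

/-- If the nonempty set `B` of points classified differently from `x*` is contained in a
finite union of hyperplanes `{x : ⟪aᵢ, x⟫ = bᵢ}` (with nonzero normals), then the minimum
projection distance of `x*` to these hyperplanes is a lower bound on `infDist x* B`,
i.e. on the pointwise ℓ₂ robustness radius of `f` at `x*`. -/
theorem min_projDist_le_infDist {n : ℕ} {Y : Type*} {ι : Type*}
    (f : EuclideanSpace ℝ (Fin n) → Y) (xs : EuclideanSpace ℝ (Fin n))
    (t : Finset ι) (ht : t.Nonempty)
    (a : ι → EuclideanSpace ℝ (Fin n)) (b : ι → ℝ)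
    (ha : ∀ i ∈ t, a i ≠ 0)
    (hBne : {x : EuclideanSpace ℝ (Fin n) | f x ≠ f xs}.Nonempty)
    (hcover : {x : EuclideanSpace ℝ (Fin n) | f x ≠ f xs} ⊆
      ⋃ i ∈ t, {x : EuclideanSpace ℝ (Fin n) | ⟪a i, x⟫ = b i}) :
    t.inf' ht (fun i => |⟪a i, xs⟫ - b i| / ‖a i‖) ≤
      Metric.infDist xs {x : EuclideanSpace ℝ (Fin n) | f x ≠ f xs} := by
  refine le_of_not_gt fun hlt => ?_
  obtain ⟨y, hy, hdy⟩ := (Metric.infDist_lt_iff hBne).mp hlt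
  refine absurd hdy (not_lt.mpr ?_)
  have := hcover hy
  simp only [Set.mem_iUnion, Set.mem_setOf_eq] at this
  obtain ⟨i, hit, hyi⟩ := this
  refine le_trans (Finset.inf'_le _ hit) ?_
  have hai : ‖a i‖ > 0 := norm_pos_iff.mpr (ha i hit)
  rw [div_le_iff₀ hai, dist_eq_norm]
  calc |⟪a i, xs⟫ - b i| = |⟪a i, xs - y⟫| := by
        rw [inner_sub_right, hyi]
    _ ≤ ‖a i‖ * ‖xs - y‖ := abs_real_inner_le_norm _ _
    _ = ‖xs - y‖ * ‖a i‖ := mul_comm _ _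
end

section
/- Let f : ℝᵐ × ℝᵏ → Y be a classifier, x* = (u*, v*) a data point, and D ⊆ ℝᵏ a nonempty finite set of sensitive values with v* ∈ D such that f(u*, v) = f(u*, v*) for all v ∈ D. For each v ∈ D assume there exists u with f(u, v) ≠ f(u*, v), and let ε_v = sSup {ε ∈ ℝ : ε ≥ 0 ∧ ∀ u, ‖u − u*‖₂ ≤ ε → f(u, v) = f(u*, v)} be the robustness radius of the slice u ↦ f(u, v) at u*. Then the local individual fairness parameter sSup {ε ∈ ℝ : ε ≥ 0 ∧ ∀ u, ∀ v ∈ D, ‖u − u*‖₂ ≤ ε → f(u, v) = f(u*, v*)} equals the minimum over v ∈ D of ε_v. -/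
/-- The local individual fairness parameter of `f` at `x* = (u*, v*)` (with sensitive
values ranging over a nonempty finite set `D` on which `f(u*, ·)` is constant) equals the
minimum over `v ∈ D` of the robustness radii of the slices `u ↦ f(u, v)` at `u*`. -/
theorem fairness_param_eq_min_robustness {m k : ℕ} {Y : Type*}
    (f : EuclideanSpace ℝ (Fin m) × EuclideanSpace ℝ (Fin k) → Y)
    (us : EuclideanSpace ℝ (Fin m)) (vs : EuclideanSpace ℝ (Fin k))
    (D : Finset (EuclideanSpace ℝ (Fin k))) (hD : D.Nonempty) (hvs : vs ∈ D)
    (hconst : ∀ v ∈ D, f (us, v) = f (us, vs))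
    (hB : ∀ v ∈ D, ∃ u : EuclideanSpace ℝ (Fin m), f (u, v) ≠ f (us, v)) :
    sSup {ε : ℝ | 0 ≤ ε ∧
        ∀ u : EuclideanSpace ℝ (Fin m), ∀ v ∈ D, ‖u - us‖ ≤ ε → f (u, v) = f (us, vs)} =
      D.inf' hD (fun v => sSup {ε : ℝ | 0 ≤ ε ∧
        ∀ u : EuclideanSpace ℝ (Fin m), ‖u - us‖ ≤ ε → f (u, v) = f (us, v)}) := by
  set S : Set ℝ := {ε : ℝ | 0 ≤ ε ∧
      ∀ u : EuclideanSpace ℝ (Fin m), ∀ v ∈ D, ‖u - us‖ ≤ ε → f (u, v) = f (us, vs)} with hSdef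
  set Sv : EuclideanSpace ℝ (Fin k) → Set ℝ := fun v => {ε : ℝ | 0 ≤ ε ∧
      ∀ u : EuclideanSpace ℝ (Fin m), ‖u - us‖ ≤ ε → f (u, v) = f (us, v)} with hSvdef
  have key : ∀ u : EuclideanSpace ℝ (Fin m), ‖u - us‖ ≤ (0:ℝ) → u = us := by
    intro u hu
    have h0 : ‖u - us‖ = 0 := le_antisymm hu (norm_nonneg _)
    have := norm_sub_eq_zero_iff.mp h0
    exact this
  have hzeroSv : ∀ v ∈ D, (0:ℝ) ∈ Sv v := by
    intro v hv
    exact ⟨le_refl 0, fun u hu => by rw [key u hu]⟩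
  have hzeroS : (0:ℝ) ∈ S := by
    refine ⟨le_refl 0, fun u v hv hu => ?_⟩
    rw [key u hu]; exact hconst v hv
  have hbddSv : ∀ v ∈ D, BddAbove (Sv v) := by
    intro v hv
    obtain ⟨u₀, hu₀⟩ := hB v hv
    refine ⟨‖u₀ - us‖, fun ε hε => ?_⟩
    by_contra hle
    push_neg at hle
    exact hu₀ (hε.2 u₀ hle.le)
  have hsub : ∀ v ∈ D, S ⊆ Sv v := by
    intro v hv ε hε
    exact ⟨hε.1, fun u hu => (hε.2 u v hv hu).trans (hconst v hv).symm⟩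
  have hbddS : BddAbove S := (hbddSv vs hvs).mono (hsub vs hvs)
  refine le_antisymm ?_ ?_
  · exact Finset.le_inf' hD _ fun v hv =>
      csSup_le_csSup (hbddSv v hv) ⟨0, hzeroS⟩ (hsub v hv)
  · set M : ℝ := D.inf' hD (fun v => sSup (Sv v)) with hM
    refine le_of_forall_lt fun x hx => ?_
    rcases lt_or_ge x 0 with hx0 | hx0
    · exact lt_of_lt_of_le hx0 (le_csSup hbddS hzeroS)
    · have hεS : (x + M) / 2 ∈ S := by
        refine ⟨by linarith, fun u v hv hu => ?_⟩
        have h1 : (x + M) / 2 < M := by linarith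
        have h2 : M ≤ sSup (Sv v) := Finset.inf'_le _ hv
        have hlt : (x + M) / 2 < sSup (Sv v) := lt_of_lt_of_le h1 h2
        obtain ⟨δ, hδ, hεδ⟩ := exists_lt_of_lt_csSup ⟨0, hzeroSv v hv⟩ hlt
        exact (hδ.2 u (hu.trans hεδ.le)).trans (hconst v hv)
      have h3 : x < (x + M) / 2 := by linarith
      exact lt_of_lt_of_le h3 (le_csSup hbddS hεS)
end

section
/- Let f : ℝᵐ × ℝᵏ → Y be a classifier, x* = (u*, v*) a data point, and D ⊆ ℝᵏ a nonempty finite set of sensitive values with v* ∈ D such that f(u*, v) = f(u*, v*) for all v ∈ D. Suppose for each v ∈ D there is a nonempty finite family of pairs (a_{v,i}, b_{v,i}) with a_{v,i} ∈ ℝᵐ nonzero and b_{v,i} ∈ ℝ, such that {u ∈ ℝᵐ : f(u, v) ≠ f(u*, v)} is contained in the union over i of the hyperplanes {u : ⟪a_{v,i}, u⟫ = b_{v,i}}. Let ε_LB be the minimum over all v ∈ D and all i of |⟪a_{v,i}, u*⟫ − b_{v,i}| / ‖a_{v,i}‖. Then for every u ∈ ℝᵐ and v ∈ D with ‖u − u*‖₂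 < ε_LB, one has f(u, v) = f(u*, v*); that is, f is ε-individually fair at x* for every ε < ε_LB. -/
open scoped RealInnerProductSpace

/-- The certificate `ε_LB` produced by the certification algorithm — the minimum, over all
sensitive values `v ∈ D` and all boundary hyperplanes of the slice `u ↦ f(u, v)`, of the
projection distance from `u*` — is a lower bound on the individual fairness parameter:
`f` is individually fair at `x* = (u*, v*)` for every radius below `ε_LB`. -/
theorem fairness_lower_bound_via_projections {m k : ℕ} {Y : Type*} {ι : Type*}
    (f : EuclideanSpace ℝ (Fin m) × EuclideanSpace ℝ (Fin k) → Y)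
    (us : EuclideanSpace ℝ (Fin m)) (vs : EuclideanSpace ℝ (Fin k))
    (D : Finset (EuclideanSpace ℝ (Fin k))) (hD : D.Nonempty) (hvs : vs ∈ D)
    (hconst : ∀ v ∈ D, f (us, v) = f (us, vs))
    (s : EuclideanSpace ℝ (Fin k) → Finset ι)
    (a : EuclideanSpace ℝ (Fin k) → ι → EuclideanSpace ℝ (Fin m))
    (b : EuclideanSpace ℝ (Fin k) → ι → ℝ)
    (hsne : ∀ v ∈ D, (s v).Nonempty)
    (ha : ∀ v ∈ D, ∀ i ∈ s v, a v i ≠ 0)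
    (hcover : ∀ v ∈ D, {u : EuclideanSpace ℝ (Fin m) | f (u, v) ≠ f (us, v)} ⊆
      ⋃ i ∈ s v, {u : EuclideanSpace ℝ (Fin m) | ⟪a v i, u⟫ = b v i}) :
    ∀ u : EuclideanSpace ℝ (Fin m), ∀ v ∈ D,
      ‖u - us‖ < D.inf' hD
        (fun w => sInf ((fun i => |⟪a w i, us⟫ - b w i| / ‖a w i‖) '' (s w : Set ι))) →
      f (u, v) = f (us, vs) := by
  intro u v hv hle
  rw [← hconst v hv]
  by_contra hne
  obtain ⟨i, hi, hui⟩ : ∃ i ∈ s v, ⟪a v i, u⟫ = b v i := by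
    have := hcover v hv hne
    simpa using this
  -- the projection distance bound
  have hane : a v i ≠ 0 := ha v hv i hi
  have hna : (0 : ℝ) < ‖a v i‖ := norm_pos_iff.mpr hane
  have key : |⟪a v i, us⟫ - b v i| / ‖a v i‖ ≤ ‖u - us‖ := by
    rw [div_le_iff₀ hna]
    have : ⟪a v i, us⟫ - b v i = ⟪a v i, us - u⟫ := by
      rw [inner_sub_right, hui]
    rw [this]
    calc |⟪a v i, us - u⟫| ≤ ‖a v i‖ * ‖us - u‖ := abs_real_inner_le_norm _ _
      _ = ‖u - us‖ * ‖a v i‖ := by rw [norm_sub_rev, mul_comm]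
  have h1 : D.inf' hD
      (fun w => sInf ((fun i => |⟪a w i, us⟫ - b w i| / ‖a w i‖) '' (s w : Set ι))) ≤
      sInf ((fun i => |⟪a v i, us⟫ - b v i| / ‖a v i‖) '' (s v : Set ι)) :=
    Finset.inf'_le _ hv
  have h2 : sInf ((fun i => |⟪a v i, us⟫ - b v i| / ‖a v i‖) '' (s v : Set ι)) ≤
      |⟪a v i, us⟫ - b v i| / ‖a v i‖ := by
    apply csInf_le
    · exact (((s v : Set ι).toFinite.image _).bddBelow)
    · exact ⟨i, by simpa using hi, rfl⟩
  linarith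
end
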